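/- arXiv:1410.0901 — 7 statements merged into one kernel-verified Lean document; each statement's English description precedes it below -/
import Mathlib

section
/- Let m ≥ 1, n ≥ 0 be integers and P_{m,n} = {(i,j,k) ∈ ℕ³ : 4i+j ≤ 4m, 4i+k ≤ 4m+n, 8i+2j+k ≤ 8m+n}. Let (a,b,c) ∈ ℕ³ be nonzero, f(i,j,k) = ai+bj+ck, and m' = max{f(v) : v ∈ P_{m,n}}. If b > max(a/4, 2c) and c ≠ 0, then f(v) = m' for v ∈ P_{m,n} if and only if v = (0, 4m, n). -/
/-- Membership in `P_{m,n} ⊂ ℕ³`. -/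
def memP (m n i j k : ℕ) : Prop :=
  4 * i + j ≤ 4 * m ∧ 4 * i + k ≤ 4 * m + n ∧ 8 * i + 2 * j + k ≤ 8 * m + n

/-- If `4b > a`, `b > 2c` and `c ≠ 0`, then `(0, 4m, n)` lies in `P_{m,n}` and is
the unique maximizer of the linear form `f(i,j,k) = ai + bj + ck` on `P_{m,n}`. -/
theorem unique_maximizer_case1 (m n : ℕ) (hm : 1 ≤ m)
    (a b c : ℕ) (habc : ¬(a = 0 ∧ b = 0 ∧ c = 0))
    (hba : 4 * b > a) (hbc : b > 2 * c) (hc : c ≠ 0) :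
    memP m n 0 (4 * m) n ∧
    (∀ i j k : ℕ, memP m n i j k →
      a * i + b * j + c * k ≤ a * 0 + b * (4 * m) + c * n) ∧
    (∀ i j k : ℕ, memP m n i j k →
      a * i + b * j + c * k = a * 0 + b * (4 * m) + c * n →
      i = 0 ∧ j = 4 * m ∧ k = n) := by
  refine ⟨⟨by omega, by omega, by omega⟩, ?_, ?_⟩
  · rintro i j k ⟨h1, h2, h3⟩
    zify at *
    nlinarith [mul_nonneg (by omega : (0:ℤ) ≤ c) (by omega : (0:ℤ) ≤ 8*m+n-(8*i+2*j+k)),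
      mul_nonneg (by omega : (0:ℤ) ≤ b - 2*c) (by omega : (0:ℤ) ≤ 4*m-(4*i+j)),
      mul_nonneg (by omega : (0:ℤ) ≤ 4*b - a) (by omega : (0:ℤ) ≤ (i:ℤ))]
  · rintro i j k ⟨h1, h2, h3⟩ heq
    have hc' : 1 ≤ c := Nat.one_le_iff_ne_zero.mpr hc
    zify at *
    have e1 : (0:ℤ) ≤ c * (8*m+n-(8*i+2*j+k)) :=
      mul_nonneg (by omega) (by omega)
    have e2 : (0:ℤ) ≤ (b - 2*c) * (4*m-(4*i+j)) :=
      mul_nonneg (by omega) (by omega)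
    have e3 : (0:ℤ) ≤ (4*b - a) * i := mul_nonneg (by omega) (by omega)
    have key : c * (8*m+n-(8*i+2*j+k)) + (b - 2*c) * (4*m-(4*i+j)) + (4*b - a) * i = (0:ℤ) := by
      linear_combination (-1 : ℤ) * heq
    have z3 : (4*b - a) * (i:ℤ) = 0 := by linarith
    have hi : (i:ℤ) = 0 := by
      rcases mul_eq_zero.mp z3 with h | h
      · omega
      · exact h
    have z2 : ((b:ℤ) - 2*c) * (4*m-(4*i+j)) = 0 := by linarith
    have hj : (4*(m:ℤ)-(4*i+j)) = 0 := by
      rcases mul_eq_zero.mp z2 with h | h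
      · omega
      · exact h
    have z1 : (c:ℤ) * (8*m+n-(8*i+2*j+k)) = 0 := by linarith
    have hk : (8*(m:ℤ)+n-(8*i+2*j+k)) = 0 := by
      rcases mul_eq_zero.mp z1 with h | h
      · omega
      · exact h
    omega
end

section
/- With notation as before (P_{m,n} ⊂ ℕ³ defined by 4i+j ≤ 4m, 4i+k ≤ 4m+n, 8i+2j+k ≤ 8m+n; f(i,j,k) = ai+bj+ck with (a,b,c) ∈ ℕ³ nonzero; m' = max of f on P_{m,n}): if 4b > a and c = 0, then the set of maximizers of f on P_{m,n} is exactly {(0, 4m, d) : 0 ≤ d ≤ n}. -/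
/-- If `4b > a` and `c = 0`, then the set of maximizers of `f(i,j,k) = ai + bj + ck`
on `P_{m,n}` is exactly `{(0, 4m, d) : 0 ≤ d ≤ n}`. -/
theorem maximizers_case2 (m n : ℕ) (hm : 1 ≤ m)
    (a b c : ℕ) (habc : ¬(a = 0 ∧ b = 0 ∧ c = 0))
    (hba : 4 * b > a) (hc : c = 0) :
    (∀ d : ℕ, d ≤ n → memP m n 0 (4 * m) d) ∧
    (∀ i j k : ℕ, memP m n i j k →
      ((∀ i' j' k' : ℕ, memP m n i' j' k' →
          a * i' + b * j' + c * k' ≤ a * i + b * j + c * k) ↔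
        (i = 0 ∧ j = 4 * m ∧ k ≤ n))) := by
  subst hc
  have hb : 1 ≤ b := by omega
  constructor
  · intro d hd
    exact ⟨by omega, by omega, by omega⟩
  · intro i j k hP
    obtain ⟨h1, h2, h3⟩ := hP
    constructor
    · intro hmax
      have h0 := hmax 0 (4 * m) 0 ⟨by omega, by omega, by omega⟩
      simp only [mul_zero, zero_mul, add_zero, zero_add] at h0
      -- h0 : b * (4 * m) ≤ a * i + b * j
      have hbi : 4 * b * i + b * j ≤ b * (4 * m) := by
        have := Nat.mul_le_mul_left b h1
        nlinarith
      have hi : i = 0 := by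
        rcases Nat.eq_zero_or_pos i with h | h
        · exact h
        · exfalso
          have h4 : (a + 1) * i ≤ 4 * b * i := Nat.mul_le_mul_right i (by omega)
          nlinarith
      subst hi
      have hj : j = 4 * m := by
        have h5 : b * (4 * m) ≤ b * j := by nlinarith
        have := Nat.le_of_mul_le_mul_left h5 hb
        omega
      exact ⟨rfl, hj, by omega⟩
    · rintro ⟨hi, hj, hk⟩
      subst hi; subst hj
      intro i' j' k' hP'
      obtain ⟨h1', h2', h3'⟩ := hP'
      have := Nat.mul_le_mul_left b h1'
      nlinarith
end

section
/- With P_{m,n} = {(i,j,k) ∈ ℕ³ : 4i+j ≤ 4m, 4i+k ≤ 4m+n, 8i+2j+k ≤ 8m+n}, f(i,j,k) = ai+bj+ck with a,b,c ∈ ℕ not all zero, and m' the maximum of f on P_{m,n}: if 2c > b, 4c > a − 2b, and b ≠ 0, then the unique maximizer of f on P_{m,n} is (0, 2m, 4m+n). -/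
/-- If `2c > b`, `4c > a − 2b` (over `ℤ`) and `b ≠ 0`, then `(0, 2m, 4m+n)` lies in
`P_{m,n}` and is the unique maximizer of `f(i,j,k) = ai + bj + ck` on `P_{m,n}`. -/
theorem unique_maximizer_case3 (m n : ℕ) (hm : 1 ≤ m)
    (a b c : ℕ) (habc : ¬(a = 0 ∧ b = 0 ∧ c = 0))
    (hcb : 2 * c > b) (hca : (4 : ℤ) * c > (a : ℤ) - 2 * b) (hb : b ≠ 0) :
    memP m n 0 (2 * m) (4 * m + n) ∧
    (∀ i j k : ℕ, memP m n i j k →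
      a * i + b * j + c * k ≤ a * 0 + b * (2 * m) + c * (4 * m + n)) ∧
    (∀ i j k : ℕ, memP m n i j k →
      a * i + b * j + c * k = a * 0 + b * (2 * m) + c * (4 * m + n) →
      i = 0 ∧ j = 2 * m ∧ k = 4 * m + n) := by
  have hb1 : (1 : ℤ) ≤ (b : ℤ) := by exact_mod_cast Nat.one_le_iff_ne_zero.mpr hb
  have hcb' : (b : ℤ) + 1 ≤ 2 * c := by exact_mod_cast hcb
  refine ⟨⟨by omega, by omega, by omega⟩, ?_, ?_⟩
  · rintro i j k ⟨h1, h2, h3⟩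
    have h2' : (4 : ℤ) * i + k ≤ 4 * m + n := by exact_mod_cast h2
    have h3' : (8 : ℤ) * i + 2 * j + k ≤ 8 * m + n := by exact_mod_cast h3
    have hp1 : (0 : ℤ) ≤ (b : ℤ) * ((8 * m + n) - (8 * i + 2 * j + k)) :=
      mul_nonneg (by positivity) (by linarith)
    have hp2 : (0 : ℤ) ≤ (2 * (c : ℤ) - b) * ((4 * m + n) - (4 * i + k)) :=
      mul_nonneg (by linarith) (by linarith)
    have hp3 : (0 : ℤ) ≤ (4 * (b : ℤ) + 8 * c - 2 * a - 2) * i :=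
      mul_nonneg (by linarith) (by positivity)
    have : (a : ℤ) * i + b * j + c * k ≤ a * 0 + b * (2 * m) + c * (4 * m + n) := by
      linarith [hp1, hp2, hp3]
    exact_mod_cast this
  · rintro i j k ⟨h1, h2, h3⟩ heq
    have h2' : (4 : ℤ) * i + k ≤ 4 * m + n := by exact_mod_cast h2
    have h3' : (8 : ℤ) * i + 2 * j + k ≤ 8 * m + n := by exact_mod_cast h3
    have heq' : (a : ℤ) * i + b * j + c * k = a * 0 + b * (2 * m) + c * (4 * m + n) := by
      exact_mod_cast heq
    have hp1 : (0 : ℤ) ≤ (b : ℤ) * ((8 * m + n) - (8 * i + 2 * j + k)) :=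
      mul_nonneg (by positivity) (by linarith)
    have hp2 : (0 : ℤ) ≤ (2 * (c : ℤ) - b) * ((4 * m + n) - (4 * i + k)) :=
      mul_nonneg (by linarith) (by linarith)
    have hp3 : (0 : ℤ) ≤ (4 * (b : ℤ) + 8 * c - 2 * a - 2) * i :=
      mul_nonneg (by linarith) (by positivity)
    have hi : (i : ℤ) ≤ 0 := by linarith [hp1, hp2, hp3]
    have hi0 : i = 0 := by exact_mod_cast le_antisymm (by exact_mod_cast hi) (by positivity)
    subst hi0
    have hp4 : (0 : ℤ) ≤ ((b : ℤ) - 1) * ((8 * m + n) - (8 * 0 + 2 * j + k)) :=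
      mul_nonneg (by linarith) (by linarith)
    have hp5 : (0 : ℤ) ≤ (2 * (c : ℤ) - b - 1) * ((4 * m + n) - (4 * 0 + k)) :=
      mul_nonneg (by linarith) (by linarith)
    have hs1 : (8 * (m : ℤ) + n) ≤ 8 * 0 + 2 * j + k := by linarith [hp1, hp2, hp4, hp5]
    have hs2 : (4 * (m : ℤ) + n) ≤ 4 * 0 + k := by linarith [hp1, hp2, hp4, hp5]
    have hs1' : 8 * m + n ≤ 8 * 0 + 2 * j + k := by exact_mod_cast hs1
    have hs2' : 4 * m + n ≤ 4 * 0 + k := by exact_mod_cast hs2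
    omega
end

section
/- For integers m ≥ 1, n ≥ 0, the maximum over P_{m,n} = {(i,j,k) ∈ ℕ³ : 4i+j ≤ 4m, 4i+k ≤ 4m+n, 8i+2j+k ≤ 8m+n} of the linear form f(i,j,k) = ai+bj+ck (a,b,c ∈ ℕ) equals m·max(a, 4b, 2b+4c) + cn. -/
private lemma caseA (m n i j k a b c : ℤ)
    (hi : 0 ≤ i) (hj : 0 ≤ j) (hk : 0 ≤ k) (hb : 0 ≤ b) (hc : 0 ≤ c)
    (h1 : 4*i+j ≤ 4*m) (h2 : 4*i+k ≤ 4*m+n) (h3 : 8*i+2*j+k ≤ 8*m+n)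
    (ha1 : 4*b ≤ a) (ha2 : 2*b+4*c ≤ a) :
    a*i+b*j+c*k ≤ m*a+c*n := by
  rcases le_total (4*b+4*c) a with h | h
  · nlinarith [mul_nonneg (by linarith : (0:ℤ) ≤ a - 4*c) (by linarith : (0:ℤ) ≤ 4*m - (4*i+j)),
      mul_nonneg hc (by linarith : (0:ℤ) ≤ 4*m+n - (4*i+k)),
      mul_nonneg (by linarith : (0:ℤ) ≤ a - 4*b - 4*c) hj]
  · nlinarith [mul_nonneg (by linarith : (0:ℤ) ≤ a - 2*b - 4*c) (by linarith : (0:ℤ) ≤ 4*m - (4*i+j)),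
      mul_nonneg (by linarith : (0:ℤ) ≤ a - 4*b) (by linarith : (0:ℤ) ≤ 4*m+n - (4*i+k)),
      mul_nonneg (by linarith : (0:ℤ) ≤ 4*b + 4*c - a) (by linarith : (0:ℤ) ≤ 8*m+n - (8*i+2*j+k))]

private lemma caseB (m n i j k a b c : ℤ)
    (hi : 0 ≤ i) (hj : 0 ≤ j) (hk : 0 ≤ k) (hc : 0 ≤ c)
    (h1 : 4*i+j ≤ 4*m) (h2 : 4*i+k ≤ 4*m+n) (h3 : 8*i+2*j+k ≤ 8*m+n)
    (ha1 : a ≤ 4*b) (ha2 : 2*b+4*c ≤ 4*b) :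
    a*i+b*j+c*k ≤ m*(4*b)+c*n := by
  nlinarith [mul_nonneg (by linarith : (0:ℤ) ≤ b - 2*c) (by linarith : (0:ℤ) ≤ 4*m - (4*i+j)),
    mul_nonneg hc (by linarith : (0:ℤ) ≤ 8*m+n - (8*i+2*j+k)),
    mul_nonneg (by linarith : (0:ℤ) ≤ 4*b - a) hi]

private lemma caseC (m n i j k a b c : ℤ)
    (hi : 0 ≤ i) (hj : 0 ≤ j) (hk : 0 ≤ k) (hb : 0 ≤ b)
    (h1 : 4*i+j ≤ 4*m) (h2 : 4*i+k ≤ 4*m+n) (h3 : 8*i+2*j+k ≤ 8*m+n)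
    (ha1 : a ≤ 2*b+4*c) (ha2 : 4*b ≤ 2*b+4*c) :
    a*i+b*j+c*k ≤ m*(2*b+4*c)+c*n := by
  nlinarith [mul_nonneg (by linarith : (0:ℤ) ≤ 2*c - b) (by linarith : (0:ℤ) ≤ 4*m+n - (4*i+k)),
    mul_nonneg hb (by linarith : (0:ℤ) ≤ 8*m+n - (8*i+2*j+k)),
    mul_nonneg (by linarith : (0:ℤ) ≤ 2*b + 4*c - a) hi]

/-- The maximum of the linear form `f(i,j,k) = ai + bj + ck` over `P_{m,n}` equals
`m · max(a, 4b, 2b + 4c) + cn`. -/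
theorem max_value_formula (m n : ℕ) (hm : 1 ≤ m)
    (a b c : ℕ) (habc : ¬(a = 0 ∧ b = 0 ∧ c = 0)) :
    (∀ i j k : ℕ, memP m n i j k →
      a * i + b * j + c * k ≤ m * max a (max (4 * b) (2 * b + 4 * c)) + c * n) ∧
    (∃ i j k : ℕ, memP m n i j k ∧
      a * i + b * j + c * k = m * max a (max (4 * b) (2 * b + 4 * c)) + c * n) := by
  constructor
  · intro i j k ⟨h1, h2, h3⟩
    rcases le_total (max (4*b) (2*b+4*c)) a with hA | hA
    · rw [max_eq_left hA]
      have ha1 : 4*b ≤ a := le_trans (le_max_left _ _) hA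
      have ha2 : 2*b+4*c ≤ a := le_trans (le_max_right _ _) hA
      have := caseA (m:ℤ) n i j k a b c (by positivity) (by positivity) (by positivity)
        (by positivity) (by positivity) (by exact_mod_cast h1) (by exact_mod_cast h2) (by exact_mod_cast h3)
        (by exact_mod_cast ha1) (by exact_mod_cast ha2)
      exact_mod_cast this
    · rw [max_eq_right hA]
      rcases le_total (2*b+4*c) (4*b) with hB | hB
      · rw [max_eq_left hB]
        have ha1 : a ≤ 4*b := le_trans hA (by rw [max_eq_left hB])
        have := caseB (m:ℤ) n i j k a b c (by positivity) (by positivity) (by positivity)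
          (by positivity) (by exact_mod_cast h1) (by exact_mod_cast h2) (by exact_mod_cast h3)
          (by exact_mod_cast ha1) (by exact_mod_cast hB)
        exact_mod_cast this
      · rw [max_eq_right hB]
        have ha1 : a ≤ 2*b+4*c := le_trans hA (by rw [max_eq_right hB])
        have := caseC (m:ℤ) n i j k a b c (by positivity) (by positivity) (by positivity)
          (by positivity) (by exact_mod_cast h1) (by exact_mod_cast h2) (by exact_mod_cast h3)
          (by exact_mod_cast ha1) (by exact_mod_cast hB)
        exact_mod_cast this
  · rcases le_total (max (4*b) (2*b+4*c)) a with hA | hA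
    · refine ⟨m, 0, n, ⟨by omega, by omega, by omega⟩, ?_⟩
      rw [max_eq_left hA]; ring
    · rw [max_eq_right hA]
      rcases le_total (2*b+4*c) (4*b) with hB | hB
      · refine ⟨0, 4*m, n, ⟨by omega, by omega, by omega⟩, ?_⟩
        rw [max_eq_left hB]; ring
      · refine ⟨0, 2*m, 4*m+n, ⟨by omega, by omega, by omega⟩, ?_⟩
        rw [max_eq_right hB]; ring
end

section
/- Let m ≥ 1, n ≥ 0 and let Q_{m,n}^* be the set of polynomials P ∈ K[x,y,z] whose support lies in {(i,j,k) ∈ ℕ³ : i+j ≤ m, 3i+3j+k ≤ 3m+n} and whose leading exponent in the lexicographic order with y > z > x is (0, m, n). Let γ = (X, Y, Z) be a polynomial automorphism of K[x,y,z] such that deg_{(4,1,0)}, deg_{(4,0,1)}, deg_{(8,2,1)} of X, Y, Z equal those of the components of β = (x+y²(y+z²)², y+z², z), and similarly the three cyclic lexicographic leading exponents of X, Y, Z agree with those of β's components (explicitly: for X they are (1,0,0), (0,4,0), (0,2,4); for Y: (0,1,0), (0,1,0), (0,0,2); for Z: (0,0,1), (0,0,1), (0,0,1); and deg_{(4,1,0)},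 deg_{(4,0,1)}, deg_{(8,2,1)} of X are 4, 4, 8, of Y are 1, 2, 2, of Z are 0, 1, 1). Then for every P ∈ Q_{m,n}^*, the polynomial (P)πγ (apply the swap π = (y,x,z), then γ) lies in P_{m,n}^*, i.e., its support lies in P_{m,n} = {(i,j,k) : 4i+j ≤ 4m, 4i+k ≤ 4m+n, 8i+2j+k ≤ 8m+n}, its lex-leading exponent with y > z > x is (0, 4m, n), and its lex-leading exponent with z > x > y is (0, 2m, 4m+n). -/
set_option maxHeartbeats 1000000


open MvPolynomial

/-- Lexicographic key: `toLex (p, toLex (q, r))`. -/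
def lkey (p q r : ℕ) : ℕ ×ₗ (ℕ ×ₗ ℕ) := toLex (p, toLex (q, r))

variable {K : Type*} [Field K]

/-- The `w`-weighted degree of a polynomial in `K[x,y,z]`. -/
noncomputable def degW (w1 w2 w3 : ℕ) (P : MvPolynomial (Fin 3) K) : ℕ :=
  P.support.sup (fun d => w1 * d 0 + w2 * d 1 + w3 * d 2)

/-- `ldeg₁ P = (i,j,k)`: leading exponent in the lex order with `x > y > z`. -/
def HasLdeg1 (P : MvPolynomial (Fin 3) K) (i j k : ℕ) : Prop :=
  (∃ d ∈ P.support, d 0 = i ∧ d 1 = j ∧ d 2 = k) ∧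
  ∀ d ∈ P.support, lkey (d 0) (d 1) (d 2) ≤ lkey i j k

/-- `ldeg₂ P = (i,j,k)`: leading exponent in the lex order with `y > z > x`. -/
def HasLdeg2 (P : MvPolynomial (Fin 3) K) (i j k : ℕ) : Prop :=
  (∃ d ∈ P.support, d 0 = i ∧ d 1 = j ∧ d 2 = k) ∧
  ∀ d ∈ P.support, lkey (d 1) (d 2) (d 0) ≤ lkey j k i

/-- `ldeg₃ P = (i,j,k)`: leading exponent in the lex order with `z > x > y`. -/
def HasLdeg3 (P : MvPolynomial (Fin 3) K) (i j k : ℕ) : Prop :=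
  (∃ d ∈ P.support, d 0 = i ∧ d 1 = j ∧ d 2 = k) ∧
  ∀ d ∈ P.support, lkey (d 2) (d 0) (d 1) ≤ lkey k i j

lemma lkey_le {p q r p' q' r' : ℕ} :
    lkey p q r ≤ lkey p' q' r' ↔ p < p' ∨ (p = p' ∧ (q < q' ∨ (q = q' ∧ r ≤ r'))) := by
  simp [lkey, Prod.Lex.le_iff]

lemma lkey_lt {p q r p' q' r' : ℕ} :
    lkey p q r < lkey p' q' r' ↔ p < p' ∨ (p = p' ∧ (q < q' ∨ (q = q' ∧ r < r'))) := by
  simp [lkey, Prod.Lex.lt_iff]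

lemma fin3_eq : ∀ (a b c i : Fin 3), a ≠ b → a ≠ c → b ≠ c → i = a ∨ i = b ∨ i = c := by decide

def HasLead (a b c : Fin 3) (P : MvPolynomial (Fin 3) K) (e : Fin 3 →₀ ℕ) : Prop :=
  e ∈ P.support ∧ ∀ d ∈ P.support, lkey (d a) (d b) (d c) ≤ lkey (e a) (e b) (e c)

lemma HasLead.mul {a b c : Fin 3} (hab : a ≠ b) (hac : a ≠ c) (hbc : b ≠ c)
    {A B : MvPolynomial (Fin 3) K} {e1 e2 : Fin 3 →₀ ℕ}
    (h1 : HasLead a b c A e1) (h2 : HasLead a b c B e2) :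
    HasLead a b c (A * B) (e1 + e2) := by
  have hmem : (e1, e2) ∈ Finset.HasAntidiagonal.antidiagonal (e1 + e2) := Finset.HasAntidiagonal.mem_antidiagonal.mpr rfl
  constructor
  · rw [mem_support_iff, coeff_mul]
    rw [Finset.sum_eq_single_of_mem (e1, e2) hmem ?hz]
    · exact mul_ne_zero (mem_support_iff.mp h1.1) (mem_support_iff.mp h2.1)
    case hz =>
      rintro ⟨d1, d2⟩ hmem hne
      rw [Finset.HasAntidiagonal.mem_antidiagonal] at hmem
      by_contra hcon
      have hd1 : d1 ∈ A.support := mem_support_iff.mpr fun h => hcon (by simp [h])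
      have hd2 : d2 ∈ B.support := mem_support_iff.mpr fun h => hcon (by simp [h])
      have k1 := h1.2 d1 hd1
      have k2 := h2.2 d2 hd2
      rw [lkey_le] at k1 k2
      have hha : d1 a + d2 a = e1 a + e2 a := by
        have := congrArg (fun f : Fin 3 →₀ ℕ => f a) hmem; simpa using this
      have hhb : d1 b + d2 b = e1 b + e2 b := by
        have := congrArg (fun f : Fin 3 →₀ ℕ => f b) hmem; simpa using this
      have hhc : d1 c + d2 c = e1 c + e2 c := by
        have := congrArg (fun f : Fin 3 →₀ ℕ => f c) hmem; simpa using this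
      have key : d1 a = e1 a ∧ d1 b = e1 b ∧ d1 c = e1 c ∧
          d2 a = e2 a ∧ d2 b = e2 b ∧ d2 c = e2 c := by omega
      apply hne
      have hd1e : d1 = e1 := by
        ext i
        rcases fin3_eq a b c i hab hac hbc with rfl | rfl | rfl
        · exact key.1
        · exact key.2.1
        · exact key.2.2.1
      have hd2e : d2 = e2 := by
        ext i
        rcases fin3_eq a b c i hab hac hbc with rfl | rfl | rfl
        · exact key.2.2.2.1
        · exact key.2.2.2.2.1
        · exact key.2.2.2.2.2
      rw [hd1e, hd2e]
  · intro d hd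
    obtain ⟨d1, hd1, d2, hd2, rfl⟩ := Finset.mem_add.mp (support_mul A B hd)
    have k1 := h1.2 d1 hd1
    have k2 := h2.2 d2 hd2
    rw [lkey_le] at k1 k2 ⊢
    simp only [Finsupp.add_apply]
    omega

lemma hasLead_one (a b c : Fin 3) : HasLead a b c (1 : MvPolynomial (Fin 3) K) 0 := by
  constructor
  · rw [mem_support_iff]
    simp
  · intro d hd
    have hd0 : d = 0 := by
      by_contra h
      rw [mem_support_iff, coeff_one, if_neg (fun hh => h hh.symm)] at hd
      exact hd rfl
    subst hd0
    exact le_refl _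

lemma HasLead.pow {a b c : Fin 3} (hab : a ≠ b) (hac : a ≠ c) (hbc : b ≠ c)
    {A : MvPolynomial (Fin 3) K} {e : Fin 3 →₀ ℕ}
    (h : HasLead a b c A e) (nn : ℕ) : HasLead a b c (A ^ nn) (nn • e) := by
  induction nn with
  | zero => rw [pow_zero, zero_smul]; exact hasLead_one a b c
  | succ k ih =>
    rw [pow_succ, succ_nsmul]
    exact ih.mul hab hac hbc h

lemma hasLead_sum {a b c : Fin 3}
    {P : MvPolynomial (Fin 3) K} {M : (Fin 3 →₀ ℕ) → MvPolynomial (Fin 3) K}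
    {L : (Fin 3 →₀ ℕ) → (Fin 3 →₀ ℕ)} {d0 : Fin 3 →₀ ℕ} (hd0 : d0 ∈ P.support)
    (hM : ∀ d ∈ P.support, HasLead a b c (M d) (L d))
    (hmax : ∀ d ∈ P.support, d ≠ d0 →
      lkey (L d a) (L d b) (L d c) < lkey (L d0 a) (L d0 b) (L d0 c)) :
    HasLead a b c (∑ d ∈ P.support, C (coeff d P) * M d) (L d0) := by
  constructor
  · rw [mem_support_iff, coeff_sum, Finset.sum_eq_single d0]
    · rw [coeff_C_mul]
      exact mul_ne_zero (mem_support_iff.mp hd0) (mem_support_iff.mp (hM d0 hd0).1)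
    · intro d hd hne
      rw [coeff_C_mul]
      have hz : coeff (L d0) (M d) = 0 := by
        by_contra h
        have := (hM d hd).2 (L d0) (mem_support_iff.mpr h)
        exact absurd (lt_of_le_of_lt this (hmax d hd hne)) (lt_irrefl _)
      rw [hz, mul_zero]
    · intro h; exact absurd hd0 h
  · intro d hd
    rw [mem_support_iff, coeff_sum] at hd
    obtain ⟨e, he, hne⟩ := Finset.exists_ne_zero_of_sum_ne_zero hd
    rw [coeff_C_mul] at hne
    have hdm : d ∈ (M e).support := mem_support_iff.mpr fun h => hne (by simp [h])
    have hle := (hM e he).2 d hdm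
    rcases eq_or_ne e d0 with rfl | hne'
    · exact hle
    · exact le_of_lt (lt_of_le_of_lt hle (hmax e he hne'))

lemma aeval_eq_sum (g : Fin 3 → MvPolynomial (Fin 3) K) (P : MvPolynomial (Fin 3) K) :
    aeval g P = ∑ d ∈ P.support, C (coeff d P) * (g 0 ^ d 0 * g 1 ^ d 1 * g 2 ^ d 2) := by
  conv_lhs => rw [P.as_sum, map_sum]
  refine Finset.sum_congr rfl fun d _ => ?_
  rw [aeval_monomial, Finsupp.prod_pow, Fin.prod_univ_three, algebraMap_eq]

lemma wt_le_degW {w1 w2 w3 : ℕ} {A : MvPolynomial (Fin 3) K} {d : Fin 3 →₀ ℕ}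
    (hd : d ∈ A.support) :
    w1 * d 0 + w2 * d 1 + w3 * d 2 ≤ degW w1 w2 w3 A :=
  Finset.le_sup (f := fun d : Fin 3 →₀ ℕ => w1 * d 0 + w2 * d 1 + w3 * d 2) hd

lemma wt_le_of_mem_pow {w1 w2 w3 : ℕ} {A : MvPolynomial (Fin 3) K} (nn : ℕ) {d : Fin 3 →₀ ℕ}
    (hd : d ∈ (A ^ nn).support) :
    w1 * d 0 + w2 * d 1 + w3 * d 2 ≤ nn * degW w1 w2 w3 A := by
  induction nn generalizing d with
  | zero =>
    rw [pow_zero] at hd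
    have hd0 : d = 0 := by
      by_contra h
      rw [mem_support_iff, coeff_one, if_neg (fun hh => h hh.symm)] at hd
      exact hd rfl
    subst hd0
    simp
  | succ k ih =>
    rw [pow_succ] at hd
    obtain ⟨d1, hd1, d2, hd2, rfl⟩ := Finset.mem_add.mp (support_mul _ _ hd)
    have hb1 := ih hd1
    have hb2 : w1 * d2 0 + w2 * d2 1 + w3 * d2 2 ≤ degW w1 w2 w3 A := wt_le_degW hd2
    simp only [Finsupp.add_apply, Nat.mul_add, Nat.succ_mul]
    linarith

lemma wt_tripow {w1 w2 w3 : ℕ} {g0 g1 g2 : MvPolynomial (Fin 3) K} (e : Fin 3 →₀ ℕ)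
    {d : Fin 3 →₀ ℕ} (hd : d ∈ (g0 ^ e 0 * g1 ^ e 1 * g2 ^ e 2).support) :
    w1 * d 0 + w2 * d 1 + w3 * d 2 ≤
      e 0 * degW w1 w2 w3 g0 + e 1 * degW w1 w2 w3 g1 + e 2 * degW w1 w2 w3 g2 := by
  obtain ⟨d1, hd1, d2, hd2, rfl⟩ := Finset.mem_add.mp (support_mul _ _ hd)
  obtain ⟨d3, hd3, d4, hd4, rfl⟩ := Finset.mem_add.mp (support_mul _ _ hd1)
  have h1 := wt_le_of_mem_pow (w1 := w1) (w2 := w2) (w3 := w3) (e 0) hd3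
  have h2 := wt_le_of_mem_pow (w1 := w1) (w2 := w2) (w3 := w3) (e 1) hd4
  have h3 := wt_le_of_mem_pow (w1 := w1) (w2 := w2) (w3 := w3) (e 2) hd2
  simp only [Finsupp.add_apply, Nat.mul_add]
  linarith

lemma mem_supp_aeval {g : Fin 3 → MvPolynomial (Fin 3) K} {P : MvPolynomial (Fin 3) K}
    {d : Fin 3 →₀ ℕ} (hd : d ∈ (aeval g P).support) :
    ∃ e ∈ P.support, d ∈ (g 0 ^ e 0 * g 1 ^ e 1 * g 2 ^ e 2).support := by
  rw [aeval_eq_sum, mem_support_iff, coeff_sum] at hd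
  obtain ⟨e, he, hne⟩ := Finset.exists_ne_zero_of_sum_ne_zero hd
  rw [coeff_C_mul] at hne
  exact ⟨e, he, mem_support_iff.mpr fun h => hne (by simp [h])⟩

/-- Lemma (from `Q*_{m,n}` to `P*_{m,n}`): if `γ = (Xp, Yp, Zp)` is a `β`-shaped
polynomial automorphism of `K[x,y,z]` and `P ∈ Q*_{m,n}`, then `(P)πγ ∈ P*_{m,n}`. -/
theorem Qstar_to_Pstar (m n : ℕ) (hm : 1 ≤ m)
    (Xp Yp Zp : MvPolynomial (Fin 3) K)
    (hbij : Function.Bijective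
      (aeval ![Xp, Yp, Zp] : MvPolynomial (Fin 3) K →ₐ[K] MvPolynomial (Fin 3) K))
    -- weighted degrees of the components agree with those of β
    (hX1 : degW 4 1 0 Xp = 4) (hX2 : degW 4 0 1 Xp = 4) (hX3 : degW 8 2 1 Xp = 8)
    (hY1 : degW 4 1 0 Yp = 1) (hY2 : degW 4 0 1 Yp = 2) (hY3 : degW 8 2 1 Yp = 2)
    (hZ1 : degW 4 1 0 Zp = 0) (hZ2 : degW 4 0 1 Zp = 1) (hZ3 : degW 8 2 1 Zp = 1)
    -- cyclic lexicographic leading exponents agree with those of β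
    (hXl1 : HasLdeg1 Xp 1 0 0) (hXl2 : HasLdeg2 Xp 0 4 0) (hXl3 : HasLdeg3 Xp 0 2 4)
    (hYl1 : HasLdeg1 Yp 0 1 0) (hYl2 : HasLdeg2 Yp 0 1 0) (hYl3 : HasLdeg3 Yp 0 0 2)
    (hZl1 : HasLdeg1 Zp 0 0 1) (hZl2 : HasLdeg2 Zp 0 0 1) (hZl3 : HasLdeg3 Zp 0 0 1)
    -- P ∈ Q*_{m,n}
    (P : MvPolynomial (Fin 3) K)
    (hPsupp : ∀ d ∈ P.support, d 0 + d 1 ≤ m ∧ 3 * d 0 + 3 * d 1 + d 2 ≤ 3 * m + n)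
    (hPl2 : HasLdeg2 P 0 m n) :
    -- conclusion : (P)πγ ∈ P*_{m,n}
    let Q : MvPolynomial (Fin 3) K := aeval ![Yp, Xp, Zp] P
    (∀ d ∈ Q.support,
        4 * d 0 + d 1 ≤ 4 * m ∧ 4 * d 0 + d 2 ≤ 4 * m + n ∧
        8 * d 0 + 2 * d 1 + d 2 ≤ 8 * m + n) ∧
    HasLdeg2 Q 0 (4 * m) n ∧ HasLdeg3 Q 0 (2 * m) (4 * m + n) := by
  intro Q
  have hQ : Q = aeval ![Yp, Xp, Zp] P := rfl
  have hg0 : (![Yp, Xp, Zp]) 0 = Yp := rfl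
  have hg1 : (![Yp, Xp, Zp]) 1 = Xp := rfl
  have hg2 : (![Yp, Xp, Zp]) 2 = Zp := rfl
  have d12 : (1 : Fin 3) ≠ 2 := by decide
  have d10 : (1 : Fin 3) ≠ 0 := by decide
  have d20 : (2 : Fin 3) ≠ 0 := by decide
  have d21 : (2 : Fin 3) ≠ 1 := by decide
  have d01 : (0 : Fin 3) ≠ 1 := by decide
  obtain ⟨⟨dP, hdPs, hdP0, hdP1, hdP2⟩, hPb⟩ := hPl2
  have hne_char : ∀ d : Fin 3 →₀ ℕ, d ≠ dP → ¬(d 0 = 0 ∧ d 1 = m ∧ d 2 = n) := by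
    intro d hne hcon
    apply hne
    ext i
    rcases fin3_eq 0 1 2 i (by decide) (by decide) (by decide) with rfl | rfl | rfl <;> omega
  have hQsum : Q = ∑ d ∈ P.support, C (coeff d P) * (Yp ^ d 0 * Xp ^ d 1 * Zp ^ d 2) := by
    rw [hQ, aeval_eq_sum, hg0, hg1, hg2]
  refine ⟨?_, ?_, ?_⟩
  -- Part (a): support bounds
  · intro d hd
    rw [hQ] at hd
    obtain ⟨e, he, hde⟩ := mem_supp_aeval hd
    rw [hg0, hg1, hg2] at hde
    obtain ⟨he1, he2⟩ := hPsupp e he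
    have b1 := wt_tripow (w1 := 4) (w2 := 1) (w3 := 0) e hde
    have b2 := wt_tripow (w1 := 4) (w2 := 0) (w3 := 1) e hde
    have b3 := wt_tripow (w1 := 8) (w2 := 2) (w3 := 1) e hde
    rw [hY1, hX1, hZ1] at b1
    rw [hY2, hX2, hZ2] at b2
    rw [hY3, hX3, hZ3] at b3
    omega
  -- Part (b): HasLdeg2 Q 0 (4m) n
  · obtain ⟨⟨eX2, heX2s, hx0, hx1, hx2⟩, hX2b⟩ := hXl2
    obtain ⟨⟨eY2, heY2s, hy0, hy1, hy2⟩, hY2b⟩ := hYl2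
    obtain ⟨⟨eZ2, heZ2s, hz0, hz1, hz2⟩, hZ2b⟩ := hZl2
    have hXL : HasLead 1 2 0 Xp eX2 := ⟨heX2s, fun d hd => by rw [hx0, hx1, hx2]; exact hX2b d hd⟩
    have hYL : HasLead 1 2 0 Yp eY2 := ⟨heY2s, fun d hd => by rw [hy0, hy1, hy2]; exact hY2b d hd⟩
    have hZL : HasLead 1 2 0 Zp eZ2 := ⟨heZ2s, fun d hd => by rw [hz0, hz1, hz2]; exact hZ2b d hd⟩
    have hval : ∀ e : Fin 3 →₀ ℕ,
        (e 0 • eY2 + e 1 • eX2 + e 2 • eZ2) 0 = 0 ∧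
        (e 0 • eY2 + e 1 • eX2 + e 2 • eZ2) 1 = e 0 + 4 * e 1 ∧
        (e 0 • eY2 + e 1 • eX2 + e 2 • eZ2) 2 = e 2 := by
      intro e
      simp only [Finsupp.add_apply, Finsupp.smul_apply, smul_eq_mul,
        hx0, hx1, hx2, hy0, hy1, hy2, hz0, hz1, hz2]
      omega
    have hsum := hasLead_sum (a := 1) (b := 2) (c := 0) (P := P)
        (M := fun e => Yp ^ e 0 * Xp ^ e 1 * Zp ^ e 2)
        (L := fun e => e 0 • eY2 + e 1 • eX2 + e 2 • eZ2)
        (d0 := dP) hdPs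
        (fun e _ => ((hYL.pow d12 d10 d20 (e 0)).mul d12 d10 d20
            (hXL.pow d12 d10 d20 (e 1))).mul d12 d10 d20 (hZL.pow d12 d10 d20 (e 2)))
        ?max2
    case max2 =>
      intro d hd hne
      have hPs := hPsupp d hd
      have hPbd := hPb d hd
      have hch := hne_char d hne
      obtain ⟨c0, c1, c2⟩ := hval d
      obtain ⟨cP0, cP1, cP2⟩ := hval dP
      beta_reduce
      rw [c0, c1, c2, cP0, cP1, cP2, lkey_lt]
      rw [lkey_le] at hPbd
      omega
    rw [← hQsum] at hsum
    obtain ⟨cP0, cP1, cP2⟩ := hval dP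
    constructor
    · refine ⟨_, hsum.1, ?_, ?_, ?_⟩ <;> beta_reduce <;> omega
    · intro d hd
      have := hsum.2 d hd
      beta_reduce at this
      rw [cP0, cP1, cP2, hdP0, hdP1, hdP2] at this
      have hE : (0 : ℕ) + 4 * m = 4 * m := by omega
      rw [hE] at this
      exact this
  -- Part (c): HasLdeg3 Q 0 (2m) (4m+n)
  · obtain ⟨⟨eX3, heX3s, hx0, hx1, hx2⟩, hX3b⟩ := hXl3
    obtain ⟨⟨eY3, heY3s, hy0, hy1, hy2⟩, hY3b⟩ := hYl3
    obtain ⟨⟨eZ3, heZ3s, hz0, hz1, hz2⟩, hZ3b⟩ := hZl3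
    have hXL : HasLead 2 0 1 Xp eX3 := ⟨heX3s, fun d hd => by rw [hx0, hx1, hx2]; exact hX3b d hd⟩
    have hYL : HasLead 2 0 1 Yp eY3 := ⟨heY3s, fun d hd => by rw [hy0, hy1, hy2]; exact hY3b d hd⟩
    have hZL : HasLead 2 0 1 Zp eZ3 := ⟨heZ3s, fun d hd => by rw [hz0, hz1, hz2]; exact hZ3b d hd⟩
    have hval : ∀ e : Fin 3 →₀ ℕ,
        (e 0 • eY3 + e 1 • eX3 + e 2 • eZ3) 0 = 0 ∧
        (e 0 • eY3 + e 1 • eX3 + e 2 • eZ3) 1 = 2 * e 1 ∧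
        (e 0 • eY3 + e 1 • eX3 + e 2 • eZ3) 2 = 2 * e 0 + 4 * e 1 + e 2 := by
      intro e
      simp only [Finsupp.add_apply, Finsupp.smul_apply, smul_eq_mul,
        hx0, hx1, hx2, hy0, hy1, hy2, hz0, hz1, hz2]
      omega
    have hsum := hasLead_sum (a := 2) (b := 0) (c := 1) (P := P)
        (M := fun e => Yp ^ e 0 * Xp ^ e 1 * Zp ^ e 2)
        (L := fun e => e 0 • eY3 + e 1 • eX3 + e 2 • eZ3)
        (d0 := dP) hdPs
        (fun e _ => ((hYL.pow d20 d21 d01 (e 0)).mul d20 d21 d01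
            (hXL.pow d20 d21 d01 (e 1))).mul d20 d21 d01 (hZL.pow d20 d21 d01 (e 2)))
        ?max3
    case max3 =>
      intro d hd hne
      have hPs := hPsupp d hd
      have hch := hne_char d hne
      obtain ⟨c0, c1, c2⟩ := hval d
      obtain ⟨cP0, cP1, cP2⟩ := hval dP
      beta_reduce
      rw [c0, c1, c2, cP0, cP1, cP2, lkey_lt]
      omega
    rw [← hQsum] at hsum
    obtain ⟨cP0, cP1, cP2⟩ := hval dP
    constructor
    · refine ⟨_, hsum.1, ?_, ?_, ?_⟩ <;> beta_reduce <;> omega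
    · intro d hd
      have := hsum.2 d hd
      beta_reduce at this
      rw [cP0, cP1, cP2, hdP0, hdP1, hdP2] at this
      have hE1 : 2 * 0 + 4 * m + n = 4 * m + n := by omega
      rw [hE1] at this
      exact this
end

section
/- Let α = (u⁸x + c₁z + d₁, u²y, uz) with u ∈ K*, c₁, d₁ ∈ K, let β = (x + y²(y+z²)², y+z², z), β⁻¹ = (x − y²(y−z²)², y−z², z), and π = (y,x,z), all automorphisms of K[x,y,z]. Then the composite πβ⁻¹αβπ equals the affine triangular automorphism (u²x, u⁸y + c₁z + d₁, uz). -/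
open MvPolynomial

/-- For `α = (u⁸x + c₁z + d₁, u²y, uz)`, the composite `πβ⁻¹αβπ` (apply `π`, then
`β⁻¹`, then `α`, then `β`, then `π`) equals `(u²x, u⁸y + c₁z + d₁, uz)`. -/
theorem composite_A3 (K : Type*) [Field K] (u : Kˣ) (c1 d1 : K) :
    let hπ : MvPolynomial (Fin 3) K →ₐ[K] MvPolynomial (Fin 3) K :=
      aeval ![X 1, X 0, X 2]
    let hβ : MvPolynomial (Fin 3) K →ₐ[K] MvPolynomial (Fin 3) K :=
      aeval ![X 0 + (X 1) ^ 2 * (X 1 + (X 2) ^ 2) ^ 2, X 1 + (X 2) ^ 2, X 2]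
    let hβi : MvPolynomial (Fin 3) K →ₐ[K] MvPolynomial (Fin 3) K :=
      aeval ![X 0 - (X 1) ^ 2 * (X 1 - (X 2) ^ 2) ^ 2, X 1 - (X 2) ^ 2, X 2]
    let hα : MvPolynomial (Fin 3) K →ₐ[K] MvPolynomial (Fin 3) K :=
      aeval ![C ((u : K) ^ 8) * X 0 + C c1 * X 2 + C d1, C ((u : K) ^ 2) * X 1,
        C (u : K) * X 2]
    hπ.comp (hβ.comp (hα.comp (hβi.comp hπ))) =
      aeval ![C ((u : K) ^ 2) * X 0, C ((u : K) ^ 8) * X 1 + C c1 * X 2 + C d1,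
        C (u : K) * X 2] := by
  intro hπ hβ hβi hα
  apply MvPolynomial.algHom_ext
  intro i
  fin_cases i <;>
    simp [hπ, hβ, hβi, hα, map_add, map_sub, map_mul, map_pow, algHom_C] <;> ring
end

section
/- Let α = (u⁸x + b₁y + c₁z + d₁, u²y, uz) with u, b₁ ∈ K* and c₁, d₁ ∈ K, and let β = (x + y²(y+z²)², y+z², z), π = (y,x,z). Writing X = x + y²(y+z²)² and Y = y + z², the composite automorphism πβ⁻¹αβπβ of K[x,y,z] equals (u²X, u⁸Y + b₁X + b₁z² + c₁z + d₁, uz). -/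
open MvPolynomial

/-- For `α = (u⁸x + b₁y + c₁z + d₁, u²y, uz)` with `u, b₁ ∈ K*`, writing
`Xp = x + y²(y+z²)²` and `Yp = y + z²`, the composite `πβ⁻¹αβπβ` equals
`(u²Xp, u⁸Yp + b₁Xp + b₁z² + c₁z + d₁, uz)`. -/
theorem composite_A2 (K : Type*) [Field K] (u b1 : Kˣ) (c1 d1 : K) :
    let Xp : MvPolynomial (Fin 3) K := X 0 + (X 1) ^ 2 * (X 1 + (X 2) ^ 2) ^ 2
    let Yp : MvPolynomial (Fin 3) K := X 1 + (X 2) ^ 2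
    let hπ : MvPolynomial (Fin 3) K →ₐ[K] MvPolynomial (Fin 3) K :=
      aeval ![X 1, X 0, X 2]
    let hβ : MvPolynomial (Fin 3) K →ₐ[K] MvPolynomial (Fin 3) K :=
      aeval ![Xp, Yp, X 2]
    let hβi : MvPolynomial (Fin 3) K →ₐ[K] MvPolynomial (Fin 3) K :=
      aeval ![X 0 - (X 1) ^ 2 * (X 1 - (X 2) ^ 2) ^ 2, X 1 - (X 2) ^ 2, X 2]
    let hα : MvPolynomial (Fin 3) K →ₐ[K] MvPolynomial (Fin 3) K :=
      aeval ![C ((u : K) ^ 8) * X 0 + C (b1 : K) * X 1 + C c1 * X 2 + C d1,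
        C ((u : K) ^ 2) * X 1, C (u : K) * X 2]
    hβ.comp (hπ.comp (hβ.comp (hα.comp (hβi.comp hπ)))) =
      aeval ![C ((u : K) ^ 2) * Xp,
        C ((u : K) ^ 8) * Yp + C (b1 : K) * Xp + C (b1 : K) * (X 2) ^ 2
          + C c1 * X 2 + C d1,
        C (u : K) * X 2] := by
  intro Xp Yp hπ hβ hβi hα
  apply MvPolynomial.algHom_ext
  intro i
  fin_cases i <;>
    simp [hπ, hβ, hβi, hα, Xp, Yp, AlgHom.comp_apply] <;> ring
end
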